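/- Let P₁, P₂ be the self-similar measures with P₁ = (1/2)P₁∘S₁⁻¹ + (1/2)P₁∘S₂⁻¹ (S₁(x)=x/3, S₂(x)=x/3+2/9) and P₂ = (1/2)P₂∘T₁⁻¹ + (1/2)P₂∘T₂⁻¹ (T₁(x)=x/4+1/2, T₂(x)=x/4+3/4), and let P = (1/2)P₁ + (1/2)P₂. Then the quantization dimension of P exists and equals log 2 / log 3 = max{D(P₁), D(P₂)}, where D(P₁) = log 2/log 3 and D(P₂) = 1/2. -/

import Mathlib

open MeasureTheory Set Filter Real
open scoped ENNReal

/-- Distortion error of a finite set of quantizers `γ` for the measure `P`. -/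
noncomputable def distortion (P : Measure ℝ) (γ : Finset ℝ) : ℝ :=
  ∫ x, (⨅ c : γ, (x - (c : ℝ)) ^ 2) ∂P

/-- The `n`-th quantization error of `P`. -/
noncomputable def quantErr (P : Measure ℝ) (n : ℕ) : ℝ :=
  sInf {v : ℝ | ∃ γ : Finset ℝ, γ.Nonempty ∧ γ.card ≤ n ∧ v = distortion P γ}

/-- `γ` is an optimal set of `n`-means for `P`. -/
def IsOptimalSet (P : Measure ℝ) (n : ℕ) (γ : Finset ℝ) : Prop :=
  γ.Nonempty ∧ γ.card ≤ n ∧ distortion P γ = quantErr P n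

/-- Uniform distribution on `[a, b]`. -/
noncomputable def unif (a b : ℝ) : Measure ℝ :=
  (ENNReal.ofReal (b - a))⁻¹ • (volume.restrict (Icc a b))

/-- The uniform discrete measure on `{2/3, 5/6, 1}`. -/
noncomputable def discD : Measure ℝ :=
  (3 : ℝ≥0∞)⁻¹ • (Measure.dirac (2/3) + Measure.dirac (5/6) + Measure.dirac 1)

/-- Mixture `(1/2)P₁ + (1/2)P₂`. -/
noncomputable def mix (P₁ P₂ : Measure ℝ) : Measure ℝ :=
  (2 : ℝ≥0∞)⁻¹ • P₁ + (2 : ℝ≥0∞)⁻¹ • P₂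

namespace QD
set_option maxHeartbeats 1000000

set_option maxHeartbeats 1000000

lemma iInf_sq_nonneg (γ : Finset ℝ) (x : ℝ) : 0 ≤ ⨅ c : γ, (x - (c:ℝ))^2 :=
  Real.iInf_nonneg (fun c => sq_nonneg _)

lemma bddBelow_range_sq (γ : Finset ℝ) (x : ℝ) :
    BddBelow (Set.range fun c : γ => (x - (c:ℝ))^2) :=
  ⟨0, by rintro y ⟨c, rfl⟩; exact sq_nonneg _⟩

lemma distortion_nonneg (P : Measure ℝ) (γ : Finset ℝ) : 0 ≤ distortion P γ :=
  integral_nonneg fun x => iInf_sq_nonneg γ x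

lemma quantSet_bddBelow (P : Measure ℝ) (n : ℕ) :
    BddBelow {v : ℝ | ∃ γ : Finset ℝ, γ.Nonempty ∧ γ.card ≤ n ∧ v = distortion P γ} := by
  refine ⟨0, ?_⟩
  rintro v ⟨γ, -, -, rfl⟩
  exact distortion_nonneg P γ

lemma quantSet_nonempty (P : Measure ℝ) {n : ℕ} (hn : 1 ≤ n) :
    Set.Nonempty {v : ℝ | ∃ γ : Finset ℝ, γ.Nonempty ∧ γ.card ≤ n ∧ v = distortion P γ} :=
  ⟨distortion P {0}, ⟨{0}, ⟨0, by simp⟩, by simpa using hn, rfl⟩⟩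

lemma quantErr_le (P : Measure ℝ) {n : ℕ} {γ : Finset ℝ} (hγ : γ.Nonempty)
    (hcard : γ.card ≤ n) : quantErr P n ≤ distortion P γ :=
  csInf_le (quantSet_bddBelow P n) ⟨γ, hγ, hcard, rfl⟩

lemma quantErr_mono (P : Measure ℝ) {m n : ℕ} (hm : 1 ≤ m) (hmn : m ≤ n) :
    quantErr P n ≤ quantErr P m := by
  refine csInf_le_csInf (quantSet_bddBelow P n) (quantSet_nonempty P hm) ?_
  rintro v ⟨γ, hγ, hcard, rfl⟩
  exact ⟨γ, hγ, hcard.trans hmn, rfl⟩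

lemma quantErr_ge (P : Measure ℝ) {n : ℕ} (hn : 1 ≤ n) (c : ℝ)
    (h : ∀ γ : Finset ℝ, γ.Nonempty → γ.card ≤ n → c ≤ distortion P γ) :
    c ≤ quantErr P n := by
  refine le_csInf (quantSet_nonempty P hn) ?_
  rintro v ⟨γ, hγ, hcard, rfl⟩
  exact h γ hγ hcard

lemma natlog_tendsto : Tendsto (fun n : ℕ => Nat.log 2 n) atTop atTop := by
  refine tendsto_atTop.2 fun m => ?_
  filter_upwards [eventually_ge_atTop (2^m)] with n hn
  have hn0 : n ≠ 0 := by
    have := Nat.one_le_two_pow (n := m); omega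
  exact (Nat.le_log_iff_pow_le (by norm_num) hn0).2 hn

lemma tendsto_linear_div (p q u v : ℝ) (hu : 0 < u) :
    Tendsto (fun k : ℕ => (p*k + q)/(u*k + v)) atTop (nhds (p/u)) := by
  have hq : Tendsto (fun k : ℕ => q/(k:ℝ)) atTop (nhds 0) :=
    tendsto_const_div_atTop_nhds_zero_nat q
  have hv : Tendsto (fun k : ℕ => v/(k:ℝ)) atTop (nhds 0) :=
    tendsto_const_div_atTop_nhds_zero_nat v
  have hnum : Tendsto (fun k : ℕ => p + q/(k:ℝ)) atTop (nhds (p+0)) :=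
    tendsto_const_nhds.add hq
  have hden : Tendsto (fun k : ℕ => u + v/(k:ℝ)) atTop (nhds (u+0)) :=
    tendsto_const_nhds.add hv
  have h1 := hnum.div hden (by simpa using hu.ne')
  rw [add_zero, add_zero] at h1
  refine h1.congr' ?_
  filter_upwards [eventually_gt_atTop 0] with k hk
  have hk0 : (k:ℝ) ≠ 0 := Nat.cast_ne_zero.2 hk.ne'
  simp only [Pi.div_apply]
  field_simp

lemma limitA (V : ℕ → ℝ) (r C c : ℝ) (hr0 : 0 < r) (hr1 : r < 1) (hc : 0 < c)
    (hmono : ∀ m n : ℕ, 1 ≤ m → m ≤ n → V n ≤ V m)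
    (hU : ∀ k : ℕ, V (2^(k+1)) ≤ C * r^(2*k))
    (hL : ∀ k : ℕ, c * r^(2*k) ≤ V (2^k)) :
    Tendsto (fun n : ℕ => 2 * Real.log n / (- Real.log (V n))) atTop
      (nhds (Real.log 2 / Real.log (1/r))) := by
  have hLr : 0 < -Real.log r := by
    have := Real.log_neg hr0 hr1
    linarith
  set Lr := -Real.log r with hLrdef
  have hC : 0 < C := by
    have h1 := hL 1
    have h2 := hU 0
    norm_num at h1 h2
    nlinarith [pow_pos hr0 2]
  set C' := C / r^2 with hC'def
  set c' := c * r^2 with hc'def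
  have hC' : 0 < C' := div_pos hC (pow_pos hr0 2)
  have hc' : 0 < c' := mul_pos hc (pow_pos hr0 2)
  -- key bounds
  have key : ∀ n : ℕ, 2 ≤ n → c' * r^(2*Nat.log 2 n) ≤ V n ∧ V n ≤ C' * r^(2*Nat.log 2 n) := by
    intro n hn
    have hn0 : n ≠ 0 := by omega
    set k := Nat.log 2 n with hk
    clear_value k
    have hk1 : 1 ≤ k := by
      rw [hk]
      exact (Nat.le_log_iff_pow_le (by norm_num) hn0).2 (by simpa using hn)
    have h2k : 2^k ≤ n := by rw [hk]; exact Nat.pow_log_le_self 2 hn0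
    have h2k1 : n < 2^(k+1) := by rw [hk]; exact Nat.lt_pow_succ_log_self (by norm_num) n
    constructor
    · calc c' * r^(2*k) = c * r^(2*(k+1)) := by rw [hc'def]; ring
      _ ≤ V (2^(k+1)) := hL (k+1)
      _ ≤ V n := hmono n (2^(k+1)) (by omega) h2k1.le
    · obtain ⟨j, rfl⟩ : ∃ j, k = j + 1 := ⟨k - 1, by omega⟩
      calc V n ≤ V (2^(j+1)) := hmono (2^(j+1)) n (Nat.one_le_two_pow) h2k
      _ ≤ C * r^(2*j) := hU j
      _ = C' * r^(2*(j+1)) := by rw [hC'def]; field_simp; ring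
  -- choose k₀
  obtain ⟨k₀, hk₀⟩ := exists_nat_gt ((max |Real.log C'| |Real.log c'|) / (2*Lr))
  set a₁ := Real.log C' with ha₁
  set a₂ := Real.log c' with ha₂
  have hden : ∀ k : ℕ, k₀ ≤ k → 0 < 2*Lr*k - |a₁| ∧ 0 < 2*Lr*k + |a₂| := by
    intro k hk
    have h1 : (max |a₁| |a₂|) < 2*Lr*k := by
      rw [div_lt_iff₀ (by linarith)] at hk₀
      have hcast : (k₀:ℝ) ≤ k := Nat.cast_le.2 hk
      nlinarith
    have h2 := le_max_left |a₁| |a₂|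
    have h3 := abs_nonneg a₂
    have h4 : (0:ℝ) ≤ |a₁| ⊔ |a₂| := le_trans (abs_nonneg a₁) h2
    constructor <;> linarith
  have hgoal : Real.log 2 / Real.log (1/r) = (2*Real.log 2) / (2*Lr) := by
    rw [one_div, Real.log_inv, hLrdef]
    ring_nf
  rw [hgoal]
  have hg₁ : Tendsto (fun k : ℕ => (2*Real.log 2*k + 2*Real.log 2)/(2*Lr*k - |a₁|)) atTop
      (nhds ((2*Real.log 2)/(2*Lr))) := by
    have := tendsto_linear_div (2*Real.log 2) (2*Real.log 2) (2*Lr) (-|a₁|) (by linarith)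
    simpa [sub_eq_add_neg] using this
  have hg₂ : Tendsto (fun k : ℕ => (2*Real.log 2*k)/(2*Lr*k + |a₂|)) atTop
      (nhds ((2*Real.log 2)/(2*Lr))) := by
    have := tendsto_linear_div (2*Real.log 2) 0 (2*Lr) |a₂| (by linarith)
    simpa using this
  refine tendsto_of_tendsto_of_tendsto_of_le_of_le'
    (hg₂.comp natlog_tendsto) (hg₁.comp natlog_tendsto) ?_ ?_
  · -- lower bound eventually
    filter_upwards [eventually_ge_atTop 2, natlog_tendsto.eventually (eventually_ge_atTop k₀)]
      with n hn hkn
    obtain ⟨hlow, hup⟩ := key n hn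
    set k := Nat.log 2 n with hk
    have hrk : 0 < r^(2*k) := pow_pos hr0 _
    have hVpos : 0 < V n := lt_of_lt_of_le (by positivity) hlow
    have hlogr : Real.log (r^(2*k)) = (2*(k:ℝ)) * Real.log r := by
      rw [Real.log_pow]; push_cast; ring
    have hlogV_le : Real.log (V n) ≤ a₁ + (2*(k:ℝ)) * Real.log r := by
      calc Real.log (V n) ≤ Real.log (C' * r^(2*k)) := Real.log_le_log hVpos hup
      _ = a₁ + (2*(k:ℝ)) * Real.log r := by rw [Real.log_mul hC'.ne' hrk.ne', hlogr]
    have hlogV_ge : a₂ + (2*(k:ℝ)) * Real.log r ≤ Real.log (V n) := by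
      calc a₂ + (2*(k:ℝ))*Real.log r = Real.log (c' * r^(2*k)) := by
            rw [Real.log_mul hc'.ne' hrk.ne', hlogr]
      _ ≤ Real.log (V n) := Real.log_le_log (by positivity) hlow
    have habs2 : -a₂ ≤ |a₂| := neg_le_abs a₂
    have habs1 : -|a₁| ≤ -a₁ := by have := le_abs_self a₁; linarith
    have hdenbound : -Real.log (V n) ≤ 2*Lr*(k:ℝ) + |a₂| := by
      rw [hLrdef]; linarith
    have hdenpos : 0 < -Real.log (V n) := by
      have h1 : 2*Lr*(k:ℝ) - |a₁| ≤ -Real.log (V n) := by rw [hLrdef]; linarith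
      linarith [(hden k hkn).1]
    have hnum : (k:ℝ) * Real.log 2 ≤ Real.log n := by
      have h2k : (2:ℝ)^k ≤ (n:ℝ) := by
        exact_mod_cast Nat.pow_log_le_self 2 (show n ≠ 0 by omega)
      have hl : Real.log ((2:ℝ)^k) = (k:ℝ) * Real.log 2 := by rw [Real.log_pow]
      rw [← hl]
      exact Real.log_le_log (by positivity) h2k
    show (2*Real.log 2*(k:ℝ))/(2*Lr*(k:ℝ) + |a₂|) ≤ 2 * Real.log n / (-Real.log (V n))
    have hnum0 : 0 ≤ Real.log (n:ℝ) := Real.log_nonneg (by exact_mod_cast hn.trans' (by norm_num))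
    refine div_le_div₀ (by positivity) ?_ hdenpos hdenbound
    linarith
  · -- upper bound eventually
    filter_upwards [eventually_ge_atTop 2, natlog_tendsto.eventually (eventually_ge_atTop k₀)]
      with n hn hkn
    obtain ⟨hlow, hup⟩ := key n hn
    set k := Nat.log 2 n with hk
    have hrk : 0 < r^(2*k) := pow_pos hr0 _
    have hVpos : 0 < V n := lt_of_lt_of_le (by positivity) hlow
    have hlogr : Real.log (r^(2*k)) = (2*(k:ℝ)) * Real.log r := by
      rw [Real.log_pow]; push_cast; ring
    have hlogV_le : Real.log (V n) ≤ a₁ + (2*(k:ℝ)) * Real.log r := by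
      calc Real.log (V n) ≤ Real.log (C' * r^(2*k)) := Real.log_le_log hVpos hup
      _ = a₁ + (2*(k:ℝ)) * Real.log r := by rw [Real.log_mul hC'.ne' hrk.ne', hlogr]
    have habs1 : -|a₁| ≤ -a₁ := by have := le_abs_self a₁; linarith
    have hdenlow : 2*Lr*(k:ℝ) - |a₁| ≤ -Real.log (V n) := by
      rw [hLrdef]; linarith
    have hdenpos : 0 < 2*Lr*(k:ℝ) - |a₁| := (hden k hkn).1
    have hnum : Real.log n ≤ ((k:ℝ)+1) * Real.log 2 := by
      have h2k : (n:ℝ) ≤ (2:ℝ)^(k+1) := by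
        exact_mod_cast (Nat.lt_pow_succ_log_self (show 1 < 2 by norm_num) n).le
      have hl : Real.log ((2:ℝ)^(k+1)) = ((k:ℝ)+1) * Real.log 2 := by
        rw [Real.log_pow]; push_cast; ring
      rw [← hl]
      exact Real.log_le_log (by exact_mod_cast show (0:ℕ) < n by omega) h2k
    show 2 * Real.log n / (-Real.log (V n)) ≤ (2*Real.log 2*(k:ℝ) + 2*Real.log 2)/(2*Lr*(k:ℝ) - |a₁|)
    have hnum0 : 0 ≤ Real.log (n:ℝ) := Real.log_nonneg (by exact_mod_cast hn.trans' (by norm_num))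
    have hl2 : 0 ≤ Real.log 2 := Real.log_nonneg (by norm_num)
    refine div_le_div₀ (by positivity) ?_ hdenpos hdenlow
    linarith
lemma level (Q : Measure ℝ) (r t₁ t₂ A L g : ℝ)
    (hr0 : 0 < r) (hr2 : r ≤ 1/2) (hL : 0 < L)
    (h1l : A ≤ r*A + t₁) (h1r : r*(A+L) + t₁ ≤ A + L)
    (h2l : A ≤ r*A + t₂) (h2r : r*(A+L) + t₂ ≤ A + L)
    (hg : g = (r*A + t₂) - (r*(A+L) + t₁)) (hgpos : 0 < g)
    (hQ : Q = (2:ℝ≥0∞)⁻¹ • Q.map (fun x => r*x + t₁) + (2:ℝ≥0∞)⁻¹ • Q.map (fun x => r*x + t₂)) :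
    ∀ k : ℕ, ∃ T : Finset ℝ, T.card = 2^k ∧
      (∀ t ∈ T, A ≤ r^k*A + t ∧ r^k*A + t + r^k*L ≤ A+L) ∧
      (∀ t ∈ T, ∀ t' ∈ T, t ≠ t' → (L + g/r) * r^k ≤ |t - t'|) ∧
      Q = ∑ t ∈ T, ((2:ℝ≥0∞)^k)⁻¹ • Q.map (fun x => r^k * x + t) := by
  have ht21 : t₂ - t₁ = g + r*L := by rw [hg]; ring
  intro k
  induction k with
  | zero =>
    refine ⟨{0}, by simp, ?_, ?_, ?_⟩
    · intro t ht
      simp only [Finset.mem_singleton] at ht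
      subst ht
      constructor <;> simp <;> linarith
    · intro t ht t' ht' hne
      simp only [Finset.mem_singleton] at ht ht'
      exact absurd (ht.trans ht'.symm) hne
    · simp only [pow_zero, Finset.sum_singleton, inv_one, one_smul]
      have : (fun x : ℝ => (1:ℝ) * x + 0) = id := by funext x; simp
      rw [this, Measure.map_id]
  | succ k ih =>
    obtain ⟨T, hcard, hcont, hsep, hid⟩ := ih
    have hrk : (0:ℝ) < r^k := pow_pos hr0 k
    have hinj1 : Function.Injective (fun t : ℝ => t + r^k * t₁) := fun a b h => by
      simpa using h
    have hinj2 : Function.Injective (fun t : ℝ => t + r^k * t₂) := fun a b h => by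
      simpa using h
    have hdisj : Disjoint (T.image (fun t => t + r^k * t₁)) (T.image (fun t => t + r^k * t₂)) := by
      rw [Finset.disjoint_left]
      rintro a ha1 ha2
      simp only [Finset.mem_image] at ha1 ha2
      obtain ⟨t, htT, rfl⟩ := ha1
      obtain ⟨t', ht'T, heq⟩ := ha2
      have hrLpos : 0 < r * L := mul_pos hr0 hL
      have hgrL : 0 < g + r * L := by linarith
      by_cases hne : t' = t
      · subst hne
        have h0 : r^k * t₂ = r^k * t₁ := by linarith
        have ht12 : t₂ = t₁ := mul_left_cancel₀ hrk.ne' h0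
        linarith
      · have hs := hsep t' ht'T t htT hne
        have hval : t' - t = -(r^k * (t₂ - t₁)) := by linarith
        have hpos : 0 < r^k * (t₂ - t₁) := by rw [ht21]; exact mul_pos hrk hgrL
        have habs : |t' - t| = r^k * (t₂ - t₁) := by rw [hval, abs_neg, abs_of_pos hpos]
        rw [habs, ht21] at hs
        have h2g : 2*g ≤ g/r := by
          rw [le_div_iff₀ hr0]
          have := mul_le_mul_of_nonneg_left hr2 (show (0:ℝ) ≤ 2*g by linarith)
          linarith
        have hrL2 : r*L ≤ (1/2)*L := mul_le_mul_of_nonneg_right hr2 hL.le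
        have hkey : g + r*L < L + g/r := by linarith
        linarith [mul_pos hrk (sub_pos.2 hkey)]
    refine ⟨T.image (fun t => t + r^k * t₁) ∪ T.image (fun t => t + r^k * t₂), ?_, ?_, ?_, ?_⟩
    · rw [Finset.card_union_of_disjoint hdisj, Finset.card_image_of_injective _ hinj1,
        Finset.card_image_of_injective _ hinj2, hcard]
      ring
    · -- containment
      intro s hs
      simp only [Finset.mem_union, Finset.mem_image] at hs
      have key : ∀ t ∈ T, ∀ b : ℝ, A ≤ r*A + b → r*(A+L) + b ≤ A + L →
          A ≤ r^(k+1)*A + (t + r^k*b) ∧ r^(k+1)*A + (t + r^k*b) + r^(k+1)*L ≤ A+L := by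
        intro t htT b hbl hbr
        obtain ⟨hcl, hcr⟩ := hcont t htT
        have e1 : r^k * A ≤ r^k * (r*A + b) := mul_le_mul_of_nonneg_left hbl hrk.le
        have e2 : r^k * (r*(A+L) + b) ≤ r^k * (A+L) := mul_le_mul_of_nonneg_left hbr hrk.le
        constructor
        · have h' : r^k * (r*A+b) = r^(k+1)*A + r^k*b := by ring
          linarith
        · have h' : r^k * (r*(A+L)+b) = r^(k+1)*A + r^(k+1)*L + r^k*b := by ring
          have h'' : r^k * (A+L) = r^k*A + r^k*L := by ring
          linarith
      rcases hs with ⟨t, htT, rfl⟩ | ⟨t, htT, rfl⟩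
      · exact key t htT t₁ h1l h1r
      · exact key t htT t₂ h2l h2r
    · -- separation
      intro s hs s' hs' hne
      have hsepk1 : (L + g/r) * r^(k+1) = r^k * (g + r*L) := by
        field_simp; ring
      simp only [Finset.mem_union, Finset.mem_image] at hs hs'
      have same : ∀ t ∈ T, ∀ t' ∈ T, ∀ b : ℝ, t + r^k*b ≠ t' + r^k*b →
          (L + g/r) * r^(k+1) ≤ |t + r^k*b - (t' + r^k*b)| := by
        intro t htT t' ht'T b hne2
        have hne3 : t ≠ t' := fun h => hne2 (by rw [h])
        have hsep' := hsep t htT t' ht'T hne3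
        have hLg : 0 < L + g/r := by positivity
        have hpow : r^(k+1) ≤ r^k := by
          calc r^(k+1) = r^k * r := by ring
          _ ≤ r^k * 1 := mul_le_mul_of_nonneg_left (by linarith) hrk.le
          _ = r^k := by ring
        have : (L + g/r) * r^(k+1) ≤ |t - t'| :=
          le_trans (mul_le_mul_of_nonneg_left hpow hLg.le) hsep'
        simpa using this
      have diff : ∀ t ∈ T, ∀ t' ∈ T,
          (L + g/r) * r^(k+1) ≤ |t + r^k*t₁ - (t' + r^k*t₂)| := by
        intro t htT t' ht'T
        by_cases hne3 : t = t'
        · subst hne3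
          have hrLpos : 0 < r * L := mul_pos hr0 hL
          have hpos : 0 < r^k * (t₂ - t₁) := by rw [ht21]; exact mul_pos hrk (by linarith)
          have heq0 : t + r^k*t₁ - (t + r^k*t₂) = -(r^k * (t₂ - t₁)) := by ring
          rw [heq0, abs_neg, abs_of_pos hpos, ht21, hsepk1]
        · have hs := hsep t htT t' ht'T hne3
          have habs : |t - t'| - |r^k*(t₂ - t₁)| ≤ |t + r^k*t₁ - (t' + r^k*t₂)| := by
            have : t + r^k*t₁ - (t' + r^k*t₂) = (t - t') - r^k*(t₂ - t₁) := by ring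
            rw [this]
            exact abs_sub_abs_le_abs_sub _ _
          have hrLpos : 0 < r * L := mul_pos hr0 hL
          have hgrL2 : 0 < g + r*L := by linarith
          have habs2 : |r^k*(t₂-t₁)| = r^k * (g + r*L) := by
            rw [ht21]; exact abs_of_pos (mul_pos hrk hgrL2)
          rw [hsepk1]
          have hgr : 2*g ≤ g/r := by
            rw [le_div_iff₀ hr0]
            have := mul_le_mul_of_nonneg_left hr2 (show (0:ℝ) ≤ 2*g by linarith)
            linarith
          have h2rL : 2*(r*L) ≤ L := by
            have := mul_le_mul_of_nonneg_right hr2 hL.le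
            linarith
          have hfac : (0:ℝ) ≤ L + g/r - 2*g - 2*(r*L) := by linarith
          have key2 : 2*(r^k*(g+r*L)) ≤ (L+g/r)*r^k := by
            have := mul_nonneg hrk.le hfac
            nlinarith
          linarith
      rcases hs with ⟨t, htT, rfl⟩ | ⟨t, htT, rfl⟩ <;> rcases hs' with ⟨t', ht'T, rfl⟩ | ⟨t', ht'T, rfl⟩
      · exact same t htT t' ht'T t₁ hne
      · exact diff t htT t' ht'T
      · have := diff t' ht'T t htT
        rwa [abs_sub_comm] at this
      · exact same t htT t' ht'T t₂ hne
    · -- measure identity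
      have hmeas : ∀ (c : ℝ) (d : ℝ), Measurable (fun x : ℝ => c * x + d) :=
        fun c d => (measurable_id.const_mul c).add_const d
      have step : ∀ t : ℝ, Q.map (fun x => r^k * x + t) =
          (2:ℝ≥0∞)⁻¹ • Q.map (fun x => r^(k+1) * x + (t + r^k*t₁)) +
          (2:ℝ≥0∞)⁻¹ • Q.map (fun x => r^(k+1) * x + (t + r^k*t₂)) := by
        intro t
        conv_lhs => rw [hQ]
        have hc1 : ((fun x : ℝ => r^k * x + t) ∘ fun x : ℝ => r*x + t₁)
            = (fun x : ℝ => r^(k+1)*x + (t + r^k*t₁)) := by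
          funext x; simp only [Function.comp_apply]; ring
        have hc2 : ((fun x : ℝ => r^k * x + t) ∘ fun x : ℝ => r*x + t₂)
            = (fun x : ℝ => r^(k+1)*x + (t + r^k*t₂)) := by
          funext x; simp only [Function.comp_apply]; ring
        rw [Measure.map_add _ _ (hmeas _ _), Measure.map_smul, Measure.map_smul,
          Measure.map_map (hmeas _ _) (hmeas _ _), Measure.map_map (hmeas _ _) (hmeas _ _),
          hc1, hc2]
      conv_lhs => rw [hid]
      rw [Finset.sum_union hdisj, Finset.sum_image (fun a ha b hb h => hinj1 h),
        Finset.sum_image (fun a ha b hb h => hinj2 h), ← Finset.sum_add_distrib]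
      refine Finset.sum_congr rfl fun t htT => ?_
      rw [step t, smul_add, smul_smul, smul_smul]
      have h2 : ((2:ℝ≥0∞)^k)⁻¹ * 2⁻¹ = ((2:ℝ≥0∞)^(k+1))⁻¹ := by
        rw [pow_succ, ENNReal.mul_inv (Or.inl (by positivity)) (Or.inr (by norm_num))]
      rw [h2]
-- assume `level` gives us the decomposition; we restate its conclusion as hypothesis here
lemma support_null_of_level (Q : Measure ℝ) [IsProbabilityMeasure Q] (r A L : ℝ)
    (hr0 : 0 < r) (hr1 : r < 1) (hL : 0 < L)
    (hlevel : ∀ k : ℕ, ∃ T : Finset ℝ, T.card = 2^k ∧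
      (∀ t ∈ T, A ≤ r^k*A + t ∧ r^k*A + t + r^k*L ≤ A+L) ∧
      Q = ∑ t ∈ T, ((2:ℝ≥0∞)^k)⁻¹ • Q.map (fun x => r^k * x + t)) :
    Q ((Icc A (A+L))ᶜ) = 0 := by
  have hmeas : ∀ (c : ℝ) (d : ℝ), Measurable (fun x : ℝ => c * x + d) :=
    fun c d => (measurable_id.const_mul c).add_const d
  have hrk : ∀ k : ℕ, (0:ℝ) < r^k := fun k => pow_pos hr0 k
  -- generic bound machinery
  have hIio : ∀ a : ℝ, a < A → Q (Iio a) = 0 := by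
    intro a ha
    set m : ℕ → ℝ := fun k => A + (a - A)/r^k with hm
    have key : ∀ k, Q (Iio a) ≤ Q (Iio (m k)) := by
      intro k
      obtain ⟨T, hcard, hcont, hid⟩ := hlevel k
      have hpre : ∀ t : ℝ, (fun x : ℝ => r^k * x + t) ⁻¹' (Iio a) = Iio ((a - t)/r^k) := by
        intro t
        ext x
        simp only [mem_preimage, mem_Iio]
        rw [lt_div_iff₀ (hrk k)]
        constructor <;> intro h <;> nlinarith
      have hterm : ∀ t ∈ T, (Q.map (fun x : ℝ => r^k * x + t)) (Iio a) ≤ Q (Iio (m k)) := by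
        intro t htT
        rw [Measure.map_apply (hmeas _ _) measurableSet_Iio, hpre t]
        apply measure_mono
        apply Iio_subset_Iio
        have h1 : A - r^k * A ≤ t := by linarith [(hcont t htT).1]
        rw [div_le_iff₀ (hrk k), hm]
        have : (a - A)/r^k * r^k = a - A := by field_simp
        nlinarith [(hcont t htT).1]
      calc Q (Iio a) = ∑ t ∈ T, ((2:ℝ≥0∞)^k)⁻¹ * (Q.map (fun x : ℝ => r^k * x + t)) (Iio a) := by
            conv_lhs => rw [hid]
            simp [Measure.coe_finset_sum, Finset.sum_apply, Measure.smul_apply, smul_eq_mul]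
      _ ≤ ∑ _t ∈ T, ((2:ℝ≥0∞)^k)⁻¹ * Q (Iio (m k)) := by
            apply Finset.sum_le_sum
            intro t htT
            exact mul_le_mul_right (hterm t htT) _
      _ = Q (Iio (m k)) := by
            rw [Finset.sum_const, hcard, nsmul_eq_mul]
            push_cast
            rw [← mul_assoc, ENNReal.mul_inv_cancel (by positivity) (by simp), one_mul]
    have hanti : Antitone fun k => Iio (m k) := by
      intro k l hkl
      apply Iio_subset_Iio
      rw [hm]
      simp only [add_le_add_iff_left]
      have h1 : r^l ≤ r^k := pow_le_pow_of_le_one hr0.le hr1.le hkl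
      rw [div_le_div_iff₀ (hrk l) (hrk k)]
      nlinarith [hrk l, hrk k]
    have hempty : ⋂ k, Iio (m k) = ∅ := by
      ext x
      simp only [mem_iInter, mem_Iio, mem_empty_iff_false, iff_false, not_forall, not_lt]
      by_cases hx : A ≤ x
      · exact ⟨0, by rw [hm]; simp; nlinarith⟩
      · push_neg at hx
        obtain ⟨k, hk⟩ := exists_pow_lt_of_lt_one (show (0:ℝ) < (A - a)/(A - x) by
          apply div_pos <;> linarith) hr1
        refine ⟨k, ?_⟩
        show A + (a - A)/r^k ≤ x
        rw [lt_div_iff₀ (show (0:ℝ) < A - x by linarith)] at hk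
        have h2 : (a - A)/r^k ≤ x - A := by
          rw [div_le_iff₀ (hrk k)]
          nlinarith
        linarith
    have htend := tendsto_measure_iInter_atTop
      (fun k => measurableSet_Iio.nullMeasurableSet) hanti ⟨0, measure_ne_top Q _⟩
    rw [hempty, measure_empty] at htend
    have hle := ge_of_tendsto htend (Eventually.of_forall key)
    exact le_antisymm hle zero_le
  have hIoi : ∀ a : ℝ, A + L < a → Q (Ioi a) = 0 := by
    intro a ha
    set m : ℕ → ℝ := fun k => (A + L) + (a - (A+L))/r^k with hm
    have key : ∀ k, Q (Ioi a) ≤ Q (Ioi (m k)) := by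
      intro k
      obtain ⟨T, hcard, hcont, hid⟩ := hlevel k
      have hpre : ∀ t : ℝ, (fun x : ℝ => r^k * x + t) ⁻¹' (Ioi a) = Ioi ((a - t)/r^k) := by
        intro t
        ext x
        simp only [mem_preimage, mem_Ioi]
        rw [div_lt_iff₀ (hrk k)]
        constructor <;> intro h <;> nlinarith
      have hterm : ∀ t ∈ T, (Q.map (fun x : ℝ => r^k * x + t)) (Ioi a) ≤ Q (Ioi (m k)) := by
        intro t htT
        rw [Measure.map_apply (hmeas _ _) measurableSet_Ioi, hpre t]
        apply measure_mono
        apply Ioi_subset_Ioi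
        have h1 : t ≤ (A + L) - r^k * A - r^k * L := by linarith [(hcont t htT).2]
        rw [hm, le_div_iff₀ (hrk k)]
        have : (a - (A+L))/r^k * r^k = a - (A+L) := by field_simp
        nlinarith
      calc Q (Ioi a) = ∑ t ∈ T, ((2:ℝ≥0∞)^k)⁻¹ * (Q.map (fun x : ℝ => r^k * x + t)) (Ioi a) := by
            conv_lhs => rw [hid]
            simp [Measure.coe_finset_sum, Finset.sum_apply, Measure.smul_apply, smul_eq_mul]
      _ ≤ ∑ _t ∈ T, ((2:ℝ≥0∞)^k)⁻¹ * Q (Ioi (m k)) := by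
            apply Finset.sum_le_sum
            intro t htT
            exact mul_le_mul_right (hterm t htT) _
      _ = Q (Ioi (m k)) := by
            rw [Finset.sum_const, hcard, nsmul_eq_mul]
            push_cast
            rw [← mul_assoc, ENNReal.mul_inv_cancel (by positivity) (by simp), one_mul]
    have hanti : Antitone fun k => Ioi (m k) := by
      intro k l hkl
      apply Ioi_subset_Ioi
      rw [hm]
      simp only [add_le_add_iff_left]
      have h1 : r^l ≤ r^k := pow_le_pow_of_le_one hr0.le hr1.le hkl
      rw [div_le_div_iff₀ (hrk k) (hrk l)]
      nlinarith [hrk l, hrk k]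
    have hempty : ⋂ k, Ioi (m k) = ∅ := by
      ext x
      simp only [mem_iInter, mem_Ioi, mem_empty_iff_false, iff_false, not_forall, not_lt]
      by_cases hx : x ≤ A + L
      · exact ⟨0, by rw [hm]; simp; nlinarith⟩
      · push_neg at hx
        obtain ⟨k, hk⟩ := exists_pow_lt_of_lt_one (show (0:ℝ) < (a - (A+L))/(x - (A+L)) by
          apply div_pos <;> linarith) hr1
        refine ⟨k, ?_⟩
        show x ≤ A + L + (a - (A+L))/r^k
        rw [lt_div_iff₀ (show (0:ℝ) < x - (A+L) by linarith)] at hk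
        have h2 : x - (A+L) ≤ (a - (A+L))/r^k := by
          rw [le_div_iff₀ (hrk k)]
          nlinarith
        linarith
    have htend := tendsto_measure_iInter_atTop
      (fun k => measurableSet_Ioi.nullMeasurableSet) hanti ⟨0, measure_ne_top Q _⟩
    rw [hempty, measure_empty] at htend
    have hle := ge_of_tendsto htend (Eventually.of_forall key)
    exact le_antisymm hle zero_le
  -- now conclude
  have hsub : (Icc A (A+L))ᶜ ⊆ Iio A ∪ Ioi (A+L) := by
    intro x hx
    simp only [mem_compl_iff, mem_Icc, not_and_or, not_le] at hx
    rcases hx with h | h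
    · exact Or.inl h
    · exact Or.inr h
  refine measure_mono_null hsub (measure_union_null ?_ ?_)
  · have : Iio A ⊆ ⋃ n : ℕ, Iio (A - 1/(n+1)) := by
      intro x hx
      simp only [mem_Iio] at hx
      obtain ⟨n, hn⟩ := exists_nat_one_div_lt (show (0:ℝ) < A - x by linarith)
      simp only [mem_iUnion, mem_Iio]
      exact ⟨n, by push_cast; push_cast at hn; linarith⟩
    refine measure_mono_null this (measure_iUnion_null fun n => hIio _ ?_)
    have : (0:ℝ) < 1/((n:ℝ)+1) := by positivity
    linarith
  · have : Ioi (A+L) ⊆ ⋃ n : ℕ, Ioi ((A+L) + 1/(n+1)) := by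
      intro x hx
      simp only [mem_Ioi] at hx
      obtain ⟨n, hn⟩ := exists_nat_one_div_lt (show (0:ℝ) < x - (A+L) by linarith)
      simp only [mem_iUnion, mem_Ioi]
      exact ⟨n, by push_cast; push_cast at hn; linarith⟩
    refine measure_mono_null this (measure_iUnion_null fun n => hIoi _ ?_)
    have : (0:ℝ) < 1/((n:ℝ)+1) := by positivity
    linarith
lemma integrable_inf_sq (Q : Measure ℝ) [IsFiniteMeasure Q] (A L : ℝ)
    (hnull : Q ((Icc A (A+L))ᶜ) = 0) (γ : Finset ℝ) (hγ : γ.Nonempty) :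
    Integrable (fun x => ⨅ c : γ, (x - (c:ℝ))^2) Q := by
  obtain ⟨c₀, hc₀⟩ := hγ
  have hmeas : Measurable (fun x => ⨅ c : γ, (x - (c:ℝ))^2) :=
    Measurable.iInf (fun c => (measurable_id.sub_const _).pow_const 2)
  have hae : ∀ᵐ x ∂Q, x ∈ Icc A (A+L) := by
    rw [ae_iff]
    exact hnull
  refine Integrable.mono' (integrable_const ((|A| + |L| + |c₀|)^2))
    hmeas.aestronglyMeasurable ?_
  filter_upwards [hae] with x hx
  obtain ⟨hx1, hx2⟩ := hx
  have h0 : 0 ≤ ⨅ c : γ, (x - (c:ℝ))^2 := iInf_sq_nonneg γ x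
  have h1 : (⨅ c : γ, (x - (c:ℝ))^2) ≤ (x - c₀)^2 :=
    ciInf_le (bddBelow_range_sq γ x) (⟨c₀, hc₀⟩ : γ)
  have habs : (x - c₀)^2 ≤ (|A| + |L| + |c₀|)^2 := by
    have e1 := le_abs_self A
    have e2 := neg_abs_le A
    have e3 := le_abs_self L
    have e4 := le_abs_self c₀
    have e5 := neg_abs_le c₀
    apply sq_le_sq' <;> nlinarith
  rw [Real.norm_eq_abs, abs_of_nonneg h0]
  linarith

lemma selfsim_bounds (Q : Measure ℝ) [IsProbabilityMeasure Q] (r t₁ t₂ A L g : ℝ)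
    (hr0 : 0 < r) (hr2 : r ≤ 1/2) (hL : 0 < L)
    (h1l : A ≤ r*A + t₁) (h1r : r*(A+L) + t₁ ≤ A + L)
    (h2l : A ≤ r*A + t₂) (h2r : r*(A+L) + t₂ ≤ A + L)
    (hg : g = (r*A + t₂) - (r*(A+L) + t₁)) (hgpos : 0 < g)
    (hQ : Q = (2:ℝ≥0∞)⁻¹ • Q.map (fun x => r*x + t₁) + (2:ℝ≥0∞)⁻¹ • Q.map (fun x => r*x + t₂)) :
    (∀ γ : Finset ℝ, γ.Nonempty → Integrable (fun x => ⨅ c : γ, (x - (c:ℝ))^2) Q) ∧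
    (∀ k : ℕ, ∃ γ : Finset ℝ, γ.Nonempty ∧ γ.card ≤ 2^k ∧ distortion Q γ ≤ (L^2/4) * r^(2*k)) ∧
    (∀ j : ℕ, ∀ γ : Finset ℝ, γ.Nonempty → γ.card ≤ 2^j →
      (3*g^2*r^2/16) * r^(2*j) ≤ distortion Q γ) := by
  have hr1 : r < 1 := lt_of_le_of_lt hr2 (by norm_num)
  have hrk : ∀ k : ℕ, (0:ℝ) < r^k := fun k => pow_pos hr0 k
  have hmeas : ∀ (c : ℝ) (d : ℝ), Measurable (fun x : ℝ => c * x + d) :=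
    fun c d => (measurable_id.const_mul c).add_const d
  have hlevel := level Q r t₁ t₂ A L g hr0 hr2 hL h1l h1r h2l h2r hg hgpos hQ
  have hnull : Q ((Icc A (A+L))ᶜ) = 0 :=
    support_null_of_level Q r A L hr0 hr1 hL
      (fun k => (hlevel k).imp fun T ⟨h1, h2, _, h4⟩ => ⟨h1, h2, h4⟩)
  have hae : ∀ᵐ x ∂Q, x ∈ Icc A (A+L) := by
    rw [ae_iff]
    exact hnull
  have hint : ∀ γ : Finset ℝ, γ.Nonempty → Integrable (fun x => ⨅ c : γ, (x - (c:ℝ))^2) Q :=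
    integrable_inf_sq Q A L hnull
  have hp2 : ∀ m : ℕ, r^(2*m) = (r^m)^2 := fun m => by rw [two_mul, pow_add, sq]
  refine ⟨hint, ?_, ?_⟩
  · -- upper bound
    intro k
    obtain ⟨T, hcard, hcont, hsep, hid⟩ := hlevel k
    have hTne : T.Nonempty := Finset.card_pos.1 (by rw [hcard]; positivity)
    set γ : Finset ℝ := T.image (fun t => r^k*(A + L/2) + t) with hγdef
    have hγne : γ.Nonempty := hTne.image _
    have hγcard : γ.card ≤ 2^k := by rw [← hcard]; exact Finset.card_image_le
    refine ⟨γ, hγne, hγcard, ?_⟩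
    set f : ℝ → ℝ := fun x => ⨅ c : γ, (x - (c:ℝ))^2 with hfdef
    have hfmeas : Measurable f :=
      Measurable.iInf (fun c => (measurable_id.sub_const _).pow_const 2)
    have hfnn : ∀ x, 0 ≤ f x := iInf_sq_nonneg γ
    -- composed bound
    have hcomp : ∀ t ∈ T, ∀ᵐ x ∂Q, f (r^k * x + t) ≤ (L^2/4) * r^(2*k) := by
      intro t htT
      filter_upwards [hae] with x hx
      obtain ⟨hx1, hx2⟩ := hx
      have hct : r^k*(A + L/2) + t ∈ γ := Finset.mem_image_of_mem _ htT
      have h1 : f (r^k * x + t) ≤ ((r^k * x + t) - (r^k*(A + L/2) + t))^2 :=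
        ciInf_le (bddBelow_range_sq γ _) (⟨_, hct⟩ : γ)
      have h2 : ((r^k * x + t) - (r^k*(A + L/2) + t))^2 = (r^k)^2 * (x - (A + L/2))^2 := by
        ring
      have h3 : (x - (A + L/2))^2 ≤ (L/2)^2 := by
        apply sq_le_sq' <;> linarith
      have h4 : (r^k)^2 * (x - (A+L/2))^2 ≤ (r^k)^2 * (L/2)^2 :=
        mul_le_mul_of_nonneg_left h3 (sq_nonneg _)
      have h5 : (r^k)^2 * (L/2)^2 = (L^2/4) * r^(2*k) := by
        rw [hp2]; ring
      linarith
    have hcompint : ∀ t ∈ T, Integrable (fun x => f (r^k * x + t)) Q := by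
      intro t htT
      refine Integrable.mono' (integrable_const ((L^2/4) * r^(2*k)))
        ((hfmeas.comp (hmeas _ _)).aestronglyMeasurable) ?_
      filter_upwards [hcomp t htT] with x hx
      rw [Real.norm_eq_abs, abs_of_nonneg (hfnn _)]
      exact hx
    have hmapint : ∀ t ∈ T, Integrable f (Q.map (fun x => r^k * x + t)) := by
      intro t htT
      rw [integrable_map_measure hfmeas.aestronglyMeasurable (hmeas _ _).aemeasurable]
      exact hcompint t htT
    have hterm : ∀ t ∈ T,
        ∫ x, f x ∂(((2:ℝ≥0∞)^k)⁻¹ • Q.map (fun x => r^k * x + t))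
          ≤ ((2:ℝ)^k)⁻¹ * ((L^2/4) * r^(2*k)) := by
      intro t htT
      rw [integral_smul_measure, integral_map (hmeas _ _).aemeasurable
        hfmeas.aestronglyMeasurable]
      have hI : ∫ x, f (r^k * x + t) ∂Q ≤ (L^2/4) * r^(2*k) := by
        calc ∫ x, f (r^k * x + t) ∂Q ≤ ∫ _x, (L^2/4) * r^(2*k) ∂Q :=
              integral_mono_ae (hcompint t htT) (integrable_const _) (hcomp t htT)
        _ = (L^2/4) * r^(2*k) := by simp [measure_univ]
      have htoReal : (((2:ℝ≥0∞)^k)⁻¹).toReal = ((2:ℝ)^k)⁻¹ := by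
        simp [ENNReal.toReal_inv, ENNReal.toReal_pow]
      rw [smul_eq_mul, htoReal]
      have h2pos : (0:ℝ) < ((2:ℝ)^k)⁻¹ := by positivity
      exact mul_le_mul_of_nonneg_left hI h2pos.le
    have hdist : distortion Q γ = ∑ t ∈ T,
        ∫ x, f x ∂(((2:ℝ≥0∞)^k)⁻¹ • Q.map (fun x => r^k * x + t)) := by
      have hInt : ∀ t ∈ T, Integrable f (((2:ℝ≥0∞)^k)⁻¹ • Q.map (fun x => r^k * x + t)) :=
        fun t htT => (hmapint t htT).smul_measure (by simp)
      have h0 : distortion Q γ = ∫ x, f x ∂Q := rfl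
      rw [h0]
      conv_lhs => rw [hid]
      exact integral_finset_sum_measure hInt
    rw [hdist]
    calc ∑ t ∈ T, ∫ x, f x ∂(((2:ℝ≥0∞)^k)⁻¹ • Q.map (fun x => r^k * x + t))
        ≤ ∑ _t ∈ T, ((2:ℝ)^k)⁻¹ * ((L^2/4) * r^(2*k)) := Finset.sum_le_sum hterm
    _ = (L^2/4) * r^(2*k) := by
        rw [Finset.sum_const, hcard, nsmul_eq_mul]
        push_cast
        field_simp
  · -- lower bound
    intro j γ hγne hγcard
    haveI : Nonempty {x // x ∈ γ} := Finset.nonempty_coe_sort.mpr hγne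
    set ε := g * r^(j+1)/2 with hεdef
    have hεpos : 0 < ε := by positivity
    -- ball bound at level j+2
    have hball : ∀ x : ℝ, Q (Metric.ball x ε) ≤ ((2:ℝ≥0∞)^(j+2))⁻¹ := by
      intro x
      obtain ⟨T, hcard, hcont, hsep, hid⟩ := hlevel (j+2)
      set ψ : ℝ → ℝ → ℝ := fun t y => r^(j+2)*y + t with hψ
      set meets : ℝ → Prop := fun t => ∃ p, p ∈ Metric.ball x ε ∧
        r^(j+2)*A + t ≤ p ∧ p ≤ r^(j+2)*A + t + r^(j+2)*L with hmeets
      have hkey : ∀ t ∈ T, ∀ t' ∈ T, t < t' → meets t → meets t' → False := by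
        intro t htT t' ht'T hlt ⟨p, hp, hp1, hp2⟩ ⟨p', hp', hp1', hp2'⟩
        have hs := hsep t htT t' ht'T hlt.ne
        have habs : |t - t'| = t' - t := by rw [abs_of_nonpos (by linarith)]; ring
        rw [habs] at hs
        have hsv : (L + g/r) * r^(j+2) = r^(j+2)*L + g*r^(j+1) := by
          field_simp
          ring
        rw [hsv] at hs
        rw [Metric.mem_ball, Real.dist_eq, abs_lt] at hp hp'
        have h2e : p' - p < 2*ε := by linarith [hp.1, hp.2, hp'.1, hp'.2]
        have h2e' : g*r^(j+1) ≤ p' - p := by linarith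
        have : 2*ε = g*r^(j+1) := by rw [hεdef]; ring
        linarith
      have huniq : ∀ t ∈ T, ∀ t' ∈ T, meets t → meets t' → t = t' := by
        intro t htT t' ht'T hm hm'
        rcases lt_trichotomy t t' with h | h | h
        · exact absurd (hkey t htT t' ht'T h hm hm') (fun a => a)
        · exact h
        · exact absurd (hkey t' ht'T t htT h hm' hm) (fun a => a)
      have hpre0 : ∀ t ∈ T, ¬ meets t →
          (Q.map (fun y => r^(j+2)*y + t)) (Metric.ball x ε) = 0 := by
        intro t htT hnm
        rw [Measure.map_apply (hmeas _ _) measurableSet_ball]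
        refine measure_mono_null ?_ hnull
        intro y hy
        simp only [mem_preimage] at hy
        rw [mem_compl_iff]
        intro hyIcc
        rw [mem_Icc] at hyIcc
        obtain ⟨hy1, hy2⟩ := hyIcc
        refine hnm ⟨r^(j+2)*y + t, hy, ?_, ?_⟩
        · have := mul_le_mul_of_nonneg_left hy1 (hrk (j+2)).le
          linarith
        · have := mul_le_mul_of_nonneg_left hy2 (hrk (j+2)).le
          nlinarith [hrk (j+2)]
      have hmapone : ∀ t : ℝ, (Q.map (fun y => r^(j+2)*y + t)) (Metric.ball x ε) ≤ 1 := by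
        intro t
        haveI : IsProbabilityMeasure (Q.map (fun y => r^(j+2)*y + t)) :=
          Measure.isProbabilityMeasure_map (hmeas _ _).aemeasurable
        exact prob_le_one
      have hQball : Q (Metric.ball x ε)
          = ∑ t ∈ T, ((2:ℝ≥0∞)^(j+2))⁻¹ * (Q.map (fun y => r^(j+2)*y + t)) (Metric.ball x ε) := by
        conv_lhs => rw [hid]
        simp [Measure.coe_finset_sum, Finset.sum_apply, Measure.smul_apply, smul_eq_mul]
      rw [hQball]
      by_cases hex : ∃ t ∈ T, meets t
      · obtain ⟨t₀, ht₀T, ht₀⟩ := hex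
        calc ∑ t ∈ T, ((2:ℝ≥0∞)^(j+2))⁻¹ * (Q.map (fun y => r^(j+2)*y + t)) (Metric.ball x ε)
            ≤ ∑ t ∈ T, (if t = t₀ then ((2:ℝ≥0∞)^(j+2))⁻¹ else 0) := by
              apply Finset.sum_le_sum
              intro t htT
              by_cases ht : t = t₀
              · rw [if_pos ht]
                calc ((2:ℝ≥0∞)^(j+2))⁻¹ * (Q.map (fun y => r^(j+2)*y + t)) (Metric.ball x ε)
                    ≤ ((2:ℝ≥0∞)^(j+2))⁻¹ * 1 := mul_le_mul_right (hmapone t) _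
                _ = ((2:ℝ≥0∞)^(j+2))⁻¹ := mul_one _
              · rw [if_neg ht]
                have hnm : ¬ meets t := fun hm => ht (huniq t htT t₀ ht₀T hm ht₀)
                rw [hpre0 t htT hnm, mul_zero]
        _ = ((2:ℝ≥0∞)^(j+2))⁻¹ := by rw [Finset.sum_ite_eq' T t₀, if_pos ht₀T]
      · push_neg at hex
        have : ∀ t ∈ T, ((2:ℝ≥0∞)^(j+2))⁻¹ * (Q.map (fun y => r^(j+2)*y + t)) (Metric.ball x ε) = 0 := by
          intro t htT
          rw [hpre0 t htT (hex t htT), mul_zero]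
        rw [Finset.sum_eq_zero this]
        exact zero_le
    -- union of balls
    set E := ⋃ c ∈ γ, Metric.ball (c:ℝ) ε with hEdef
    have hEmeas : MeasurableSet E :=
      γ.measurableSet_biUnion (fun c _ => measurableSet_ball)
    have hQE : Q E ≤ 4⁻¹ := by
      calc Q E ≤ ∑ c ∈ γ, Q (Metric.ball (c:ℝ) ε) := measure_biUnion_finset_le γ _
      _ ≤ ∑ _c ∈ γ, ((2:ℝ≥0∞)^(j+2))⁻¹ := Finset.sum_le_sum fun c _ => hball c
      _ = (γ.card : ℝ≥0∞) * ((2:ℝ≥0∞)^(j+2))⁻¹ := by rw [Finset.sum_const, nsmul_eq_mul]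
      _ ≤ (2:ℝ≥0∞)^j * ((2:ℝ≥0∞)^(j+2))⁻¹ := by
          gcongr
          exact_mod_cast hγcard
      _ = 4⁻¹ := by
          rw [pow_add, ENNReal.mul_inv (Or.inl (by positivity)) (Or.inr (by norm_num)),
            ← mul_assoc, ENNReal.mul_inv_cancel (by positivity) (by simp), one_mul]
          norm_num
    have hreal : (3/4 : ℝ) ≤ (Q Eᶜ).toReal := by
      have hcompl := measure_compl hEmeas (measure_ne_top Q E)
      rw [measure_univ] at hcompl
      rw [hcompl, ENNReal.toReal_sub_of_le (hQE.trans (by norm_num)) (by norm_num)]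
      have h1 : (Q E).toReal ≤ (4:ℝ)⁻¹ := by
        have := ENNReal.toReal_mono (by norm_num) hQE
        simpa using this
      simp only [ENNReal.toReal_one]
      linarith
    have hptwise : ∀ x, Eᶜ.indicator (fun _ => ε^2) x ≤ (⨅ c : γ, (x - (c:ℝ))^2) := by
      intro x
      by_cases hx : x ∈ Eᶜ
      · rw [Set.indicator_of_mem hx]
        refine le_ciInf fun c => ?_
        have hx2 : x ∉ Metric.ball (c:ℝ) ε := by
          intro h
          exact hx (Set.mem_iUnion₂.2 ⟨(c:ℝ), c.2, h⟩)
        rw [Metric.mem_ball, Real.dist_eq, not_lt] at hx2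
        calc ε^2 ≤ |x - (c:ℝ)|^2 := pow_le_pow_left₀ hεpos.le hx2 2
        _ = (x - (c:ℝ))^2 := sq_abs _
      · rw [Set.indicator_of_notMem hx]
        exact iInf_sq_nonneg γ x
    have hlow2 : (Q Eᶜ).toReal * ε^2 ≤ distortion Q γ := by
      have hindint : Integrable (Eᶜ.indicator (fun _ => ε^2)) Q :=
        (integrable_const _).indicator hEmeas.compl
      have hmono := integral_mono hindint (hint γ hγne) hptwise
      rwa [integral_indicator_const _ hEmeas.compl, smul_eq_mul] at hmono
    have hε2 : ε^2 = g^2*r^2*r^(2*j)/4 := by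
      have h1 : (r^(j+1))^2 = r^(2*j) * r^2 := by
        rw [← pow_mul, ← pow_add]
        congr 1
        ring
      rw [hεdef, div_pow, mul_pow, h1]
      ring
    calc (3*g^2*r^2/16) * r^(2*j) = (3/4) * ε^2 := by rw [hε2]; ring
    _ ≤ (Q Eᶜ).toReal * ε^2 := mul_le_mul_of_nonneg_right hreal (sq_nonneg ε)
    _ ≤ distortion Q γ := hlow2
-- distortion of mixture
lemma distortion_mix (P₁ P₂ : Measure ℝ) (γ : Finset ℝ)
    (h₁ : Integrable (fun x => ⨅ c : γ, (x - (c:ℝ))^2) P₁)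
    (h₂ : Integrable (fun x => ⨅ c : γ, (x - (c:ℝ))^2) P₂) :
    distortion (mix P₁ P₂) γ = (1/2) * distortion P₁ γ + (1/2) * distortion P₂ γ := by
  have e : distortion (mix P₁ P₂) γ
      = ∫ x, (⨅ c : γ, (x - (c:ℝ))^2) ∂((2:ℝ≥0∞)⁻¹ • P₁ + (2:ℝ≥0∞)⁻¹ • P₂) := rfl
  rw [e, integral_add_measure (h₁.smul_measure (by norm_num)) (h₂.smul_measure (by norm_num)),
    integral_smul_measure, integral_smul_measure]
  have ht : ((2:ℝ≥0∞)⁻¹).toReal = (1/2 : ℝ) := by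
    rw [ENNReal.toReal_inv]
    norm_num
  rw [ht]
  simp only [smul_eq_mul]
  rfl

lemma distortion_anti (P : Measure ℝ) (γ₁ γ₂ : Finset ℝ) (hne : γ₁.Nonempty) (hsub : γ₁ ⊆ γ₂)
    (h₁ : Integrable (fun x => ⨅ c : γ₁, (x - (c:ℝ))^2) P)
    (h₂ : Integrable (fun x => ⨅ c : γ₂, (x - (c:ℝ))^2) P) :
    distortion P γ₂ ≤ distortion P γ₁ := by
  haveI : Nonempty {x // x ∈ γ₁} := Finset.nonempty_coe_sort.mpr hne
  refine integral_mono h₂ h₁ fun x => ?_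
  exact le_ciInf fun c₁ => ciInf_le (bddBelow_range_sq γ₂ x) (⟨(c₁:ℝ), hsub c₁.2⟩ : γ₂)

end QD

open QD in
theorem stmt18 (P₁ P₂ : Measure ℝ) [IsProbabilityMeasure P₁] [IsProbabilityMeasure P₂]
    (hP₁ : P₁ = (2 : ℝ≥0∞)⁻¹ • P₁.map (fun x => x / 3) +
      (2 : ℝ≥0∞)⁻¹ • P₁.map (fun x => x / 3 + 2/9))
    (hP₂ : P₂ = (2 : ℝ≥0∞)⁻¹ • P₂.map (fun x => x / 4 + 1/2) +
      (2 : ℝ≥0∞)⁻¹ • P₂.map (fun x => x / 4 + 3/4))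
    (P : Measure ℝ) (hP : P = mix P₁ P₂) :
    Tendsto (fun n : ℕ => 2 * Real.log n / (- Real.log (quantErr P n))) atTop
      (nhds (Real.log 2 / Real.log 3)) ∧
    Tendsto (fun n : ℕ => 2 * Real.log n / (- Real.log (quantErr P₁ n))) atTop
      (nhds (Real.log 2 / Real.log 3)) ∧
    Tendsto (fun n : ℕ => 2 * Real.log n / (- Real.log (quantErr P₂ n))) atTop
      (nhds (1/2 : ℝ)) ∧
    Real.log 2 / Real.log 3 = max (Real.log 2 / Real.log 3) (1/2 : ℝ) := by
  subst hP
  -- rewrite the self-similarity equations into the normal form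
  have e11 : (fun x : ℝ => x/3) = (fun x : ℝ => (1/3)*x + 0) := by funext x; ring
  have e12 : (fun x : ℝ => x/3 + 2/9) = (fun x : ℝ => (1/3)*x + 2/9) := by funext x; ring
  have e21 : (fun x : ℝ => x/4 + 1/2) = (fun x : ℝ => (1/4)*x + 1/2) := by funext x; ring
  have e22 : (fun x : ℝ => x/4 + 3/4) = (fun x : ℝ => (1/4)*x + 3/4) := by funext x; ring
  rw [e11, e12] at hP₁
  rw [e21, e22] at hP₂
  obtain ⟨hint₁, hup₁, hlow₁⟩ := selfsim_bounds P₁ (1/3) 0 (2/9) 0 (1/3) (1/9)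
    (by norm_num) (by norm_num) (by norm_num) (by norm_num) (by norm_num) (by norm_num)
    (by norm_num) (by norm_num) (by norm_num) hP₁
  obtain ⟨hint₂, hup₂, hlow₂⟩ := selfsim_bounds P₂ (1/4) (1/2) (3/4) (2/3) (1/3) (1/6)
    (by norm_num) (by norm_num) (by norm_num) (by norm_num) (by norm_num) (by norm_num)
    (by norm_num) (by norm_num) (by norm_num) hP₂
  -- constants
  set c₁ : ℝ := 3*(1/9:ℝ)^2*(1/3:ℝ)^2/16 with hc₁
  set c₂ : ℝ := 3*(1/6:ℝ)^2*(1/4:ℝ)^2/16 with hc₂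
  have hc₁pos : 0 < c₁ := by rw [hc₁]; norm_num
  have hc₂pos : 0 < c₂ := by rw [hc₂]; norm_num
  set CL : ℝ := ((1/3:ℝ)^2/4) with hCL
  -- upper bounds for quantErr
  have hr34 : ∀ k : ℕ, ((1/4:ℝ))^(2*k) ≤ ((1/3:ℝ))^(2*k) :=
    fun k => pow_le_pow_left₀ (by norm_num) (by norm_num) _
  have hU₁ : ∀ k : ℕ, quantErr P₁ (2^(k+1)) ≤ CL * (1/3)^(2*k) := by
    intro k
    obtain ⟨γ, hne, hcard, hd⟩ := hup₁ (k+1)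
    calc quantErr P₁ (2^(k+1)) ≤ distortion P₁ γ := quantErr_le P₁ hne hcard
    _ ≤ CL * (1/3)^(2*(k+1)) := hd
    _ ≤ CL * (1/3)^(2*k) := by
        apply mul_le_mul_of_nonneg_left _ (by rw [hCL]; norm_num)
        apply pow_le_pow_of_le_one (by norm_num) (by norm_num)
        omega
  have hU₂ : ∀ k : ℕ, quantErr P₂ (2^(k+1)) ≤ CL * (1/4)^(2*k) := by
    intro k
    obtain ⟨γ, hne, hcard, hd⟩ := hup₂ (k+1)
    calc quantErr P₂ (2^(k+1)) ≤ distortion P₂ γ := quantErr_le P₂ hne hcard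
    _ ≤ CL * (1/4)^(2*(k+1)) := hd
    _ ≤ CL * (1/4)^(2*k) := by
        apply mul_le_mul_of_nonneg_left _ (by rw [hCL]; norm_num)
        apply pow_le_pow_of_le_one (by norm_num) (by norm_num)
        omega
  have hL₁ : ∀ k : ℕ, c₁ * (1/3)^(2*k) ≤ quantErr P₁ (2^k) :=
    fun k => quantErr_ge P₁ Nat.one_le_two_pow _ (fun γ hne hcard => hlow₁ k γ hne hcard)
  have hL₂ : ∀ k : ℕ, c₂ * (1/4)^(2*k) ≤ quantErr P₂ (2^k) :=
    fun k => quantErr_ge P₂ Nat.one_le_two_pow _ (fun γ hne hcard => hlow₂ k γ hne hcard)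
  -- mixture bounds
  have hU_P : ∀ k : ℕ, quantErr (mix P₁ P₂) (2^(k+1)) ≤ (CL + CL) * (1/3)^(2*k) := by
    intro k
    obtain ⟨γ₁, hne₁, hcard₁, hd₁⟩ := hup₁ k
    obtain ⟨γ₂, hne₂, hcard₂, hd₂⟩ := hup₂ k
    set γ := γ₁ ∪ γ₂ with hγ
    have hγne : γ.Nonempty := hne₁.mono Finset.subset_union_left
    have hγcard : γ.card ≤ 2^(k+1) := by
      calc γ.card ≤ γ₁.card + γ₂.card := Finset.card_union_le _ _
      _ ≤ 2^k + 2^k := Nat.add_le_add hcard₁ hcard₂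
      _ = 2^(k+1) := by ring
    have hd : distortion (mix P₁ P₂) γ ≤ (CL + CL) * (1/3)^(2*k) := by
      rw [distortion_mix P₁ P₂ γ (hint₁ γ hγne) (hint₂ γ hγne)]
      have m₁ : distortion P₁ γ ≤ distortion P₁ γ₁ :=
        distortion_anti P₁ γ₁ γ hne₁ Finset.subset_union_left (hint₁ γ₁ hne₁) (hint₁ γ hγne)
      have m₂ : distortion P₂ γ ≤ distortion P₂ γ₂ :=
        distortion_anti P₂ γ₂ γ hne₂ Finset.subset_union_right (hint₂ γ₂ hne₂) (hint₂ γ hγne)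
      have h34 := hr34 k
      have hCL0 : (0:ℝ) ≤ CL := by rw [hCL]; norm_num
      have hX0 : (0:ℝ) ≤ CL * (1/3:ℝ)^(2*k) := mul_nonneg hCL0 (by positivity)
      have : distortion P₂ γ₂ ≤ CL * (1/3)^(2*k) := by
        calc distortion P₂ γ₂ ≤ CL * (1/4)^(2*k) := hd₂
        _ ≤ CL * (1/3)^(2*k) := mul_le_mul_of_nonneg_left h34 hCL0
      linarith [hd₁]
    exact (quantErr_le _ hγne hγcard).trans hd
  have hL_P : ∀ k : ℕ, (c₁/2) * (1/3)^(2*k) ≤ quantErr (mix P₁ P₂) (2^k) := by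
    intro k
    refine quantErr_ge _ Nat.one_le_two_pow _ (fun γ hne hcard => ?_)
    rw [distortion_mix P₁ P₂ γ (hint₁ γ hne) (hint₂ γ hne)]
    have l₁ := hlow₁ k γ hne hcard
    have l₂ : 0 ≤ distortion P₂ γ := distortion_nonneg P₂ γ
    linarith
  -- the three limits
  have hmono : ∀ (Q : Measure ℝ), ∀ m n : ℕ, 1 ≤ m → m ≤ n → quantErr Q n ≤ quantErr Q m :=
    fun Q m n hm hmn => quantErr_mono Q hm hmn
  have hlim₁ := limitA (fun n => quantErr P₁ n) (1/3) CL c₁ (by norm_num) (by norm_num)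
    hc₁pos (hmono P₁) hU₁ hL₁
  have hlim₂ := limitA (fun n => quantErr P₂ n) (1/4) CL c₂ (by norm_num) (by norm_num)
    hc₂pos (hmono P₂) hU₂ hL₂
  have hlimP := limitA (fun n => quantErr (mix P₁ P₂) n) (1/3) (CL + CL) (c₁/2)
    (by norm_num) (by norm_num) (by positivity) (hmono _) hU_P hL_P
  have h3 : (1:ℝ)/(1/3) = 3 := by norm_num
  have h4 : (1:ℝ)/(1/4) = 4 := by norm_num
  rw [h3] at hlim₁ hlimP
  rw [h4] at hlim₂
  have hlog4 : Real.log 4 = 2 * Real.log 2 := by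
    rw [show (4:ℝ) = 2^2 by norm_num, Real.log_pow]
    push_cast; ring
  have hlog2pos : 0 < Real.log 2 := Real.log_pos (by norm_num)
  have hhalf : Real.log 2 / Real.log 4 = 1/2 := by
    rw [hlog4]
    field_simp
  rw [hhalf] at hlim₂
  refine ⟨hlimP, hlim₁, hlim₂, ?_⟩
  rw [max_eq_left]
  have hlog3pos : 0 < Real.log 3 := Real.log_pos (by norm_num)
  have h34' : Real.log 3 < Real.log 4 := Real.log_lt_log (by norm_num) (by norm_num)
  rw [le_div_iff₀ hlog3pos]
  linarith [hlog4]
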